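/- Let Y and Y' be doubly-resonant saddle-nodes in prepared form (with eigenvalue parameters λ, λ' ∈ ℂ\{0} respectively). If some fibered formal diffeomorphism conjugates Y to Y', then res(Y) = res(Y'). -/

import Mathlib

open MvPowerSeries

noncomputable section

/-- `R3` is the ring `ℂ[[x, y₁, y₂]]` of formal power series in three variables, where
variable `0` plays the role of `x`, variable `1` of `y₁` and variable `2` of `y₂`. -/
abbrev R3 : Type := MvPowerSeries (Fin 3) ℂ

/-- Build a formal power series from its coefficient function. -/
def mk3 (g : (Fin 3 →₀ ℕ) → ℂ) : R3 := g

/-- Coefficient of the monomial with exponents `m` in `f`. -/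
def cf (m : Fin 3 →₀ ℕ) (f : R3) : ℂ := MvPowerSeries.coeff m f

/-- The exponent vector of the monomial `x^{k₀} y₁^{k₁} y₂^{k₂}`. -/
def e (k₀ k₁ k₂ : ℕ) : Fin 3 →₀ ℕ :=
  Finsupp.single 0 k₀ + Finsupp.single 1 k₁ + Finsupp.single 2 k₂

/-- Formal partial derivative with respect to the `i`-th variable. -/
def pd (i : Fin 3) (f : R3) : R3 :=
  mk3 fun m => ((m i : ℂ) + 1) * cf (m + Finsupp.single i 1) f

/-- The formal vector field (derivation) `b 0 · ∂/∂x + b 1 · ∂/∂y₁ + b 2 · ∂/∂y₂`. -/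
def VF (b : Fin 3 → R3) (f : R3) : R3 := ∑ i : Fin 3, b i * pd i f

/-- The maximal ideal `𝔪` of `ℂ[[x,y₁,y₂]]` (series with zero constant term). -/
def mI : Ideal R3 := RingHom.ker (MvPowerSeries.constantCoeff (σ := Fin 3) (R := ℂ))

/-- The variables, as power series. -/
def Xv (i : Fin 3) : R3 := MvPowerSeries.X i

/-- Constant power series. -/
def Cc (a : ℂ) : R3 := MvPowerSeries.C (σ := Fin 3) (R := ℂ) a

/-- The matrix of linear coefficients of a triple of power series. -/
def linM (φ : Fin 3 → R3) : Matrix (Fin 3) (Fin 3) ℂ :=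
  Matrix.of fun i j => cf (Finsupp.single j 1) (φ i)

/-- `φ` is a formal diffeomorphism: a triple in `𝔪³` with invertible linear part. -/
def IsDiffeo (φ : Fin 3 → R3) : Prop :=
  (∀ i, (MvPowerSeries.constantCoeff (σ := Fin 3) (R := ℂ)) (φ i) = 0) ∧ IsUnit (linM φ).det

/-- `φ` is fibered: its first component is the variable `x`. -/
def IsFibered (φ : Fin 3 → R3) : Prop := φ 0 = Xv 0

/-- Pullback (substitution) action: `pb φ f = f(φ 0, φ 1, φ 2)`, written coefficientwise
(the sum below has only finitely many nonzero terms when each `φ i` has zero constant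
term, which is the case for formal diffeomorphisms). -/
def pb (φ : Fin 3 → R3) (f : R3) : R3 :=
  mk3 fun k => ∑' m : Fin 3 →₀ ℕ, cf m f * cf k (∏ i : Fin 3, φ i ^ (m i))

/-- `Φ` conjugates `Y` to `Z` (that is, `Z = Φ_*(Y)`): `Φ*(Z(f)) = Y(Φ*(f))` for all `f`. -/
def Conj (φ Y Z : Fin 3 → R3) : Prop :=
  ∀ f : R3, pb φ (VF Z f) = VF Y (pb φ f)

/-- The power series `c(y₁ y₂)` obtained from a one-variable series `c` by substituting
`v = y₁ y₂`. -/
def csub (c : PowerSeries ℂ) : R3 :=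
  mk3 fun m => if m 0 = 0 ∧ m 1 = m 2 then PowerSeries.coeff (R := ℂ) (m 1) c else 0

/-- Components of the normal form
`x²∂/∂x + (−λ + a₁x + c₁(y₁y₂))y₁∂/∂y₁ + (λ + a₂x + c₂(y₁y₂))y₂∂/∂y₂`. -/
def NF (l a₁ a₂ : ℂ) (c₁ c₂ : PowerSeries ℂ) : Fin 3 → R3 :=
  ![Xv 0 ^ 2,
    (Cc (-l) + Cc a₁ * Xv 0 + csub c₁) * Xv 1,
    (Cc l + Cc a₂ * Xv 0 + csub c₂) * Xv 2]

/-- Components of a doubly-resonant saddle-node in prepared form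
`x²∂/∂x + (−λy₁ + F₁)∂/∂y₁ + (λy₂ + F₂)∂/∂y₂`. -/
def SN (l : ℂ) (F₁ F₂ : R3) : Fin 3 → R3 :=
  ![Xv 0 ^ 2, Cc (-l) * Xv 1 + F₁, Cc l * Xv 2 + F₂]

/-- The residue of the prepared saddle-node with nonlinear parts `F₁, F₂`: the coefficient
of `x y₁` in `F₁` plus the coefficient of `x y₂` in `F₂`. -/
def resid (F₁ F₂ : R3) : ℂ := cf (e 1 1 0) F₁ + cf (e 1 0 1) F₂

/-- `z` is not a nonpositive rational number. -/
def NotQle0 (z : ℂ) : Prop := ∀ q : ℚ, q ≤ 0 → z ≠ (q : ℂ)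

/-- `φ` is transversally symplectic (with respect to `ω = dy₁∧dy₂/x` and `dx`):
it is fibered and `(∂φ₁/∂y₁)(∂φ₂/∂y₂) − (∂φ₁/∂y₂)(∂φ₂/∂y₁) = 1`. -/
def TransSymp (φ : Fin 3 → R3) : Prop :=
  φ 0 = Xv 0 ∧ pd 1 (φ 1) * pd 2 (φ 2) - pd 2 (φ 1) * pd 1 (φ 2) = 1

/-- `b` depends only on the variable `x`. -/
def OnlyX (b : R3) : Prop := ∀ m : Fin 3 →₀ ℕ, (m 1 ≠ 0 ∨ m 2 ≠ 0) → cf m b = 0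

/-- The vector field with components `b` is transversally Hamiltonian (w.r.t.
`ω = dy₁∧dy₂/x` and `dx`): `b 0 ∈ x·ℂ[[x]]` and `x·(∂b₁/∂y₁ + ∂b₂/∂y₂) = b 0`. -/
def TransHam (b : Fin 3 → R3) : Prop :=
  OnlyX (b 0) ∧ (MvPowerSeries.constantCoeff (σ := Fin 3) (R := ℂ)) (b 0) = 0 ∧
    Xv 0 * (pd 1 (b 1) + pd 2 (b 2)) = b 0


/-! ### Auxiliary lemmas -/

lemma cf_mk3 (g : (Fin 3 →₀ ℕ) → ℂ) (k : Fin 3 →₀ ℕ) : cf k (mk3 g) = g k := rfl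

@[simp] lemma e_apply0 (a b c : ℕ) : (e a b c) 0 = a := by
  simp [e, Finsupp.single_apply]
@[simp] lemma e_apply1 (a b c : ℕ) : (e a b c) 1 = b := by
  simp [e, Finsupp.single_apply]
@[simp] lemma e_apply2 (a b c : ℕ) : (e a b c) 2 = c := by
  simp [e, Finsupp.single_apply]

lemma fin3_cases (i : Fin 3) : i = 0 ∨ i = 1 ∨ i = 2 := by omega

lemma e_ext (m : Fin 3 →₀ ℕ) : m = e (m 0) (m 1) (m 2) := by
  ext i
  rcases fin3_cases i with h | h | h <;> subst h <;> simp

@[simp] lemma e_inj {a b c a' b' c' : ℕ} :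
    e a b c = e a' b' c' ↔ a = a' ∧ b = b' ∧ c = c' := by
  constructor
  · intro h
    refine ⟨?_, ?_, ?_⟩
    · have := congrArg (fun m : Fin 3 →₀ ℕ => m 0) h; simpa using this
    · have := congrArg (fun m : Fin 3 →₀ ℕ => m 1) h; simpa using this
    · have := congrArg (fun m : Fin 3 →₀ ℕ => m 2) h; simpa using this
  · rintro ⟨rfl, rfl, rfl⟩; rfl

lemma e_zero : e 0 0 0 = 0 := by ext i; rcases fin3_cases i with h | h | h <;> subst h <;> simp

lemma single0_eq : Finsupp.single (0 : Fin 3) 1 = e 1 0 0 := by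
  ext i; rcases fin3_cases i with h | h | h <;> subst h <;> simp [Finsupp.single_apply]
lemma single1_eq : Finsupp.single (1 : Fin 3) 1 = e 0 1 0 := by
  ext i; rcases fin3_cases i with h | h | h <;> subst h <;> simp [Finsupp.single_apply]
lemma single2_eq : Finsupp.single (2 : Fin 3) 1 = e 0 0 1 := by
  ext i; rcases fin3_cases i with h | h | h <;> subst h <;> simp [Finsupp.single_apply]

lemma e_add (a b c a' b' c' : ℕ) : e a b c + e a' b' c' = e (a + a') (b + b') (c + c') := by
  ext i; rcases fin3_cases i with h | h | h <;> subst h <;> simp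

/-- total degree of an exponent vector -/
def dg (m : Fin 3 →₀ ℕ) : ℕ := m 0 + m 1 + m 2

lemma dg_e (a b c : ℕ) : dg (e a b c) = a + b + c := by simp [dg]

lemma dg_add (u v : Fin 3 →₀ ℕ) : dg (u + v) = dg u + dg v := by
  simp [dg]; ring

lemma dg_eq_zero {m : Fin 3 →₀ ℕ} (h : dg m = 0) : m = 0 := by
  rw [e_ext m]
  have h0 : m 0 = 0 := by unfold dg at h; omega
  have h1 : m 1 = 0 := by unfold dg at h; omega
  have h2 : m 2 = 0 := by unfold dg at h; omega
  rw [h0, h1, h2, e_zero]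

/-- `Lw n f` : all coefficients of total degree `< n` vanish -/
def Lw (n : ℕ) (f : R3) : Prop := ∀ m, dg m < n → cf m f = 0

lemma lw_one {f : R3} (h : (MvPowerSeries.constantCoeff (σ := Fin 3) (R := ℂ)) f = 0) : Lw 1 f := by
  intro m hm
  have : m = 0 := dg_eq_zero (by omega)
  subst this
  simpa [cf, MvPowerSeries.coeff_zero_eq_constantCoeff] using h

lemma lw_mul {m n : ℕ} {f g : R3} (hf : Lw m f) (hg : Lw n g) : Lw (m + n) (f * g) := by
  intro k hk
  rw [cf, MvPowerSeries.coeff_mul]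
  refine Finset.sum_eq_zero fun p hp => ?_
  rw [Finset.HasAntidiagonal.mem_antidiagonal] at hp
  have hd : dg p.1 + dg p.2 = dg k := by rw [← dg_add, hp]
  by_cases h1 : dg p.1 < m
  · rw [show MvPowerSeries.coeff p.1 f = cf p.1 f from rfl, hf p.1 h1, zero_mul]
  · have : dg p.2 < n := by omega
    rw [show MvPowerSeries.coeff p.2 g = cf p.2 g from rfl, hg p.2 this, mul_zero]

lemma lw_pow {f : R3} (hf : Lw 1 f) (n : ℕ) : Lw n (f ^ n) := by
  induction n with
  | zero => intro k hk; omega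
  | succ n ih =>
      have := lw_mul ih hf
      rw [← pow_succ] at this
      exact this

lemma lw_add {n : ℕ} {f g : R3} (hf : Lw n f) (hg : Lw n g) : Lw n (f + g) := by
  intro k hk
  rw [cf, map_add, show MvPowerSeries.coeff k f = cf k f from rfl,
    show MvPowerSeries.coeff k g = cf k g from rfl, hf k hk, hg k hk, add_zero]

lemma lw_mem2 {f : R3} (hf : f ∈ mI ^ 2) : Lw 2 f := by
  rw [pow_two] at hf
  refine Submodule.mul_induction_on hf ?_ ?_
  · intro a ha b hb
    exact lw_mul (lw_one ha) (lw_one hb)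
  · intro a b ha hb
    exact lw_add ha hb

lemma lw_prod3 (φ : Fin 3 → R3) (hφ : ∀ i, (MvPowerSeries.constantCoeff (σ := Fin 3) (R := ℂ)) (φ i) = 0)
    (m : Fin 3 →₀ ℕ) : Lw (dg m) (∏ i : Fin 3, φ i ^ (m i)) := by
  rw [Fin.prod_univ_three]
  have h0 := lw_pow (lw_one (hφ 0)) (m 0)
  have h1 := lw_pow (lw_one (hφ 1)) (m 1)
  have h2 := lw_pow (lw_one (hφ 2)) (m 2)
  exact lw_mul (lw_mul h0 h1) h2

/-! ### Coefficients of products -/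

lemma cf_X_mul_of_le (i : Fin 3) (k k' : Fin 3 →₀ ℕ) (hk : k = Finsupp.single i 1 + k')
    (h : R3) : cf k (Xv i * h) = cf k' h := by
  rw [cf, Xv, MvPowerSeries.X_def, MvPowerSeries.coeff_monomial_mul, if_pos, one_mul, hk,
    add_tsub_cancel_left]
  · rfl
  · rw [hk]; exact le_add_right le_rfl

lemma cf_X_mul_of_zero (i : Fin 3) (k : Fin 3 →₀ ℕ) (hk : k i = 0) (h : R3) :
    cf k (Xv i * h) = 0 := by
  rw [cf, Xv, MvPowerSeries.X_def, MvPowerSeries.coeff_monomial_mul, if_neg]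
  intro hle
  have := Finsupp.le_def.mp hle i
  simp [hk] at this

lemma cf_X0sq_mul (k : Fin 3 →₀ ℕ) (hk : k 0 ≤ 1) (h : R3) : cf k (Xv 0 ^ 2 * h) = 0 := by
  rw [cf, Xv, MvPowerSeries.X_pow_eq, MvPowerSeries.coeff_monomial_mul, if_neg]
  intro hle
  have := Finsupp.le_def.mp hle 0
  simp [Finsupp.single_apply] at this
  omega

lemma cf_lw2_mul {F : R3} (hF : Lw 2 F) (k : Fin 3 →₀ ℕ) (hk : dg k ≤ 2) (h : R3) :
    cf k (F * h) = cf k F * cf 0 h := by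
  rw [cf, MvPowerSeries.coeff_mul]
  rw [show (∑ p ∈ Finset.HasAntidiagonal.antidiagonal k, MvPowerSeries.coeff p.1 F * MvPowerSeries.coeff p.2 h)
      = ∑ p ∈ Finset.HasAntidiagonal.antidiagonal k, cf p.1 F * cf p.2 h from rfl]
  refine Finset.sum_eq_single_of_mem (k, 0) (by rw [Finset.HasAntidiagonal.mem_antidiagonal]; simp) ?_
  intro p hp hne
  rw [Finset.HasAntidiagonal.mem_antidiagonal] at hp
  have hd : dg p.1 + dg p.2 = dg k := by rw [← dg_add, hp]
  by_cases h1 : dg p.1 < 2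
  · rw [hF p.1 h1, zero_mul]
  · have h2 : dg p.2 = 0 := by omega
    have : p.2 = 0 := dg_eq_zero h2
    exfalso
    apply hne
    have : p.1 = k := by rw [← hp, this, add_zero]
    exact Prod.ext this ‹p.2 = 0›

lemma eq_e100 {u : Fin 3 →₀ ℕ} (h1 : dg u = 1) (h0 : u 0 = 1) : u = e 1 0 0 := by
  rw [e_ext u, h0]
  unfold dg at h1
  rw [show u 1 = 0 by omega, show u 2 = 0 by omega]

lemma cf_quad_zero {f g : R3} (hf0 : cf 0 f = 0) (hg0 : cf 0 g = 0)
    (hf1 : cf (e 1 0 0) f = 0) (hg1 : cf (e 1 0 0) g = 0)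
    (k : Fin 3 →₀ ℕ) (hk : dg k = 2) (hk0 : k 0 = 1) : cf k (f * g) = 0 := by
  rw [cf, MvPowerSeries.coeff_mul]
  refine Finset.sum_eq_zero fun p hp => ?_
  rw [Finset.HasAntidiagonal.mem_antidiagonal] at hp
  have hd : dg p.1 + dg p.2 = dg k := by rw [← dg_add, hp]
  have hadd0 : p.1 0 + p.2 0 = 1 := by
    have := congrArg (fun m : Fin 3 →₀ ℕ => m 0) hp
    simpa [hk0] using this
  rcases Nat.lt_or_ge (dg p.1) 1 with h1 | h1
  · have : p.1 = 0 := dg_eq_zero (by omega)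
    rw [show MvPowerSeries.coeff p.1 f = cf p.1 f from rfl, this, hf0, zero_mul]
  rcases Nat.lt_or_ge (dg p.2) 1 with h2 | h2
  · have : p.2 = 0 := dg_eq_zero (by omega)
    rw [show MvPowerSeries.coeff p.2 g = cf p.2 g from rfl, this, hg0, mul_zero]
  have e1 : dg p.1 = 1 := by omega
  have e2 : dg p.2 = 1 := by omega
  rcases Nat.eq_zero_or_pos (p.1 0) with hz | hz
  · have : p.2 = e 1 0 0 := eq_e100 e2 (by omega)
    rw [show MvPowerSeries.coeff p.2 g = cf p.2 g from rfl, this, hg1, mul_zero]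
  · have : p.1 = e 1 0 0 := eq_e100 e1 (by omega)
    rw [show MvPowerSeries.coeff p.1 f = cf p.1 f from rfl, this, hf1, zero_mul]

/-! ### Partial derivatives and `pb` on variables -/

lemma cf_pd (i : Fin 3) (f : R3) (k : Fin 3 →₀ ℕ) :
    cf k (pd i f) = ((k i : ℂ) + 1) * cf (k + Finsupp.single i 1) f := rfl

lemma pd_X_same (i : Fin 3) : pd i (Xv i) = 1 := by
  apply MvPowerSeries.ext
  intro k
  rw [show MvPowerSeries.coeff k (pd i (Xv i)) = cf k (pd i (Xv i)) from rfl, cf_pd]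
  rw [cf, Xv, MvPowerSeries.coeff_X, MvPowerSeries.coeff_one]
  by_cases hk : k = 0
  · subst hk; simp
  · rw [if_neg, if_neg hk, mul_zero]
    intro hc
    apply hk
    have := add_right_cancel (hc.trans (zero_add (Finsupp.single i 1)).symm)
    exact this

lemma pd_X_ne (i j : Fin 3) (hij : i ≠ j) : pd i (Xv j) = 0 := by
  apply MvPowerSeries.ext
  intro k
  rw [show MvPowerSeries.coeff k (pd i (Xv j)) = cf k (pd i (Xv j)) from rfl, cf_pd]
  rw [cf, Xv, MvPowerSeries.coeff_X, if_neg, mul_zero, map_zero]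
  intro hc
  have := congrArg (fun m : Fin 3 →₀ ℕ => m i) hc
  simp [Finsupp.single_apply, hij, Ne.symm hij] at this

lemma prod_pow_single (φ : Fin 3 → R3) (j : Fin 3) :
    (∏ i : Fin 3, φ i ^ ((Finsupp.single j 1) i)) = φ j := by
  refine Finset.prod_eq_single j (fun i _ hij => ?_) (by simp) |>.trans ?_
  · rw [Finsupp.single_apply, if_neg (Ne.symm hij), pow_zero]
  · rw [Finsupp.single_apply, if_pos rfl, pow_one]

lemma pb_X (φ : Fin 3 → R3) (j : Fin 3) : pb φ (Xv j) = φ j := by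
  apply MvPowerSeries.ext
  intro k
  rw [show MvPowerSeries.coeff k (pb φ (Xv j)) = cf k (pb φ (Xv j)) from rfl, pb, cf_mk3]
  rw [tsum_eq_single (Finsupp.single j 1) ?_]
  · rw [show cf (Finsupp.single j 1) (Xv j) = 1 from by
      rw [cf, Xv]; exact MvPowerSeries.coeff_index_single_self_X j]
    rw [one_mul, prod_pow_single]
    rfl
  · intro m hm
    rw [show cf m (Xv j) = 0 from by rw [cf, Xv, MvPowerSeries.coeff_X, if_neg hm], zero_mul]

/-! ### Finite expansion of `pb` coefficients in low degree -/

def S10 : Finset (Fin 3 →₀ ℕ) :=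
  {e 0 0 0, e 1 0 0, e 0 1 0, e 0 0 1, e 2 0 0, e 1 1 0, e 1 0 1, e 0 2 0, e 0 1 1, e 0 0 2}

lemma mem_S10 {m : Fin 3 →₀ ℕ} (h : dg m ≤ 2) : m ∈ S10 := by
  rw [e_ext m]
  unfold dg at h
  simp only [S10, Finset.mem_insert, Finset.mem_singleton, e_inj]
  omega

lemma cf_pb (φ : Fin 3 → R3) (hφ : ∀ i, (MvPowerSeries.constantCoeff (σ := Fin 3) (R := ℂ)) (φ i) = 0)
    (f : R3) (k : Fin 3 →₀ ℕ) (hk : dg k ≤ 2) :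
    cf k (pb φ f) =
      cf (e 0 0 0) f * cf k 1 + cf (e 1 0 0) f * cf k (φ 0) + cf (e 0 1 0) f * cf k (φ 1)
      + cf (e 0 0 1) f * cf k (φ 2)
      + cf (e 2 0 0) f * cf k (φ 0 ^ 2) + cf (e 1 1 0) f * cf k (φ 0 * φ 1)
      + cf (e 1 0 1) f * cf k (φ 0 * φ 2)
      + cf (e 0 2 0) f * cf k (φ 1 ^ 2) + cf (e 0 1 1) f * cf k (φ 1 * φ 2)
      + cf (e 0 0 2) f * cf k (φ 2 ^ 2) := by
  rw [show cf k (pb φ f) = ∑' m : Fin 3 →₀ ℕ, cf m f * cf k (∏ i : Fin 3, φ i ^ (m i)) from rfl]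
  rw [tsum_eq_sum (s := S10) ?_]
  · simp only [S10]
    rw [Finset.sum_insert (by simp), Finset.sum_insert (by simp), Finset.sum_insert (by simp),
      Finset.sum_insert (by simp), Finset.sum_insert (by simp), Finset.sum_insert (by simp),
      Finset.sum_insert (by simp), Finset.sum_insert (by simp), Finset.sum_insert (by simp),
      Finset.sum_singleton]
    simp only [Fin.prod_univ_three, e_apply0, e_apply1, e_apply2, pow_zero, pow_one, one_mul,
      mul_one]
    ring
  · intro m hm
    have hdg : dg k < dg m := by
      by_contra hc
      exact hm (mem_S10 (by omega))
    rw [lw_prod3 φ hφ m k hdg, mul_zero]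

/-! ### Small coefficient facts -/

lemma cf_add (k : Fin 3 →₀ ℕ) (f g : R3) : cf k (f + g) = cf k f + cf k g := by
  rw [cf, map_add]; rfl

lemma cf_Cc_mul (k : Fin 3 →₀ ℕ) (a : ℂ) (f : R3) : cf k (Cc a * f) = a * cf k f := by
  rw [cf, Cc, MvPowerSeries.coeff_C_mul]; rfl

lemma cf_e_one (a b c : ℕ) : cf (e a b c) (1 : R3) = if a = 0 ∧ b = 0 ∧ c = 0 then 1 else 0 := by
  rw [cf, MvPowerSeries.coeff_one, ← e_zero]
  simp only [e_inj]

lemma cf_e_X0 (a b c : ℕ) : cf (e a b c) (Xv 0) = if a = 1 ∧ b = 0 ∧ c = 0 then 1 else 0 := by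
  rw [cf, Xv, MvPowerSeries.coeff_X, single0_eq]
  simp only [e_inj]

lemma cf_e_X1 (a b c : ℕ) : cf (e a b c) (Xv 1) = if a = 0 ∧ b = 1 ∧ c = 0 then 1 else 0 := by
  rw [cf, Xv, MvPowerSeries.coeff_X, single1_eq]
  simp only [e_inj]

lemma cf_e_X2 (a b c : ℕ) : cf (e a b c) (Xv 2) = if a = 0 ∧ b = 0 ∧ c = 1 then 1 else 0 := by
  rw [cf, Xv, MvPowerSeries.coeff_X, single2_eq]
  simp only [e_inj]

lemma single0_eq2 : Finsupp.single (0 : Fin 3) 2 = e 2 0 0 := by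
  ext i; rcases fin3_cases i with h | h | h <;> subst h <;> simp [Finsupp.single_apply]

lemma cf_e_X0sq (a b c : ℕ) :
    cf (e a b c) (Xv 0 ^ 2) = if a = 2 ∧ b = 0 ∧ c = 0 then 1 else 0 := by
  rw [cf, Xv, MvPowerSeries.coeff_X_pow, single0_eq2]
  simp only [e_inj]

lemma cf_pd1_e (a b c : ℕ) (f : R3) :
    cf (e a b c) (pd 1 f) = ((b : ℂ) + 1) * cf (e a (b + 1) c) f := by
  rw [cf_pd, single1_eq, e_add]
  norm_num

lemma cf_pd2_e (a b c : ℕ) (f : R3) :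
    cf (e a b c) (pd 2 f) = ((c : ℂ) + 1) * cf (e a b (c + 1)) f := by
  rw [cf_pd, single2_eq, e_add]
  norm_num

lemma cf0_pd1 (f : R3) : cf 0 (pd 1 f) = cf (e 0 1 0) f := by
  rw [← e_zero, cf_pd1_e]; norm_num

lemma cf0_pd2 (f : R3) : cf 0 (pd 2 f) = cf (e 0 0 1) f := by
  rw [← e_zero, cf_pd2_e]; norm_num

lemma lw2_cf {F : R3} (h : Lw 2 F) (a b c : ℕ) (h2 : a + b + c < 2) : cf (e a b c) F =  0 :=
  h _ (by rw [dg_e]; omega)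

/-! ### Coefficients of the vector field applied to a series -/

lemma cfVF (l : ℂ) (F₁ F₂ : R3) (h1 : Lw 2 F₁) (h2 : Lw 2 F₂) (h : R3) (k : Fin 3 →₀ ℕ)
    (hk0 : k 0 ≤ 1) (hdg : dg k ≤ 2) :
    cf k (VF (SN l F₁ F₂) h) =
      -l * cf k (Xv 1 * pd 1 h) + l * cf k (Xv 2 * pd 2 h)
      + cf k F₁ * cf 0 (pd 1 h) + cf k F₂ * cf 0 (pd 2 h) := by
  rw [VF, Fin.sum_univ_three]
  rw [show SN l F₁ F₂ 0 = Xv 0 ^ 2 from rfl, show SN l F₁ F₂ 1 = Cc (-l) * Xv 1 + F₁ from rfl,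
    show SN l F₁ F₂ 2 = Cc l * Xv 2 + F₂ from rfl]
  rw [add_mul, add_mul, mul_assoc, mul_assoc]
  rw [cf_add, cf_add, cf_add, cf_add, cf_Cc_mul, cf_Cc_mul, cf_X0sq_mul k hk0,
    cf_lw2_mul h1 k hdg, cf_lw2_mul h2 k hdg]
  ring

lemma VF_X (b : Fin 3 → R3) (j : Fin 3) : VF b (Xv j) = b j := by
  rw [VF, Fin.sum_univ_three]
  rcases fin3_cases j with h | h | h <;> subst h
  · rw [pd_X_same, pd_X_ne 1 0 (by decide), pd_X_ne 2 0 (by decide)]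
    simp
  · rw [pd_X_same, pd_X_ne 0 1 (by decide), pd_X_ne 2 1 (by decide)]
    simp
  · rw [pd_X_same, pd_X_ne 0 2 (by decide), pd_X_ne 1 2 (by decide)]
    simp

lemma cf_zero_eq (f : R3) : cf 0 f = (MvPowerSeries.constantCoeff (σ := Fin 3) (R := ℂ)) f := by
  rw [cf, MvPowerSeries.coeff_zero_eq_constantCoeff]

lemma cf_pb_SN1 (μ : ℂ) (F' : R3) (hF' : Lw 2 F') (φ : Fin 3 → R3)
    (hφc : ∀ i, (MvPowerSeries.constantCoeff (σ := Fin 3) (R := ℂ)) (φ i) = 0) (hf0 : φ 0 = Xv 0)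
    (a b c : ℕ) (h2 : a + b + c ≤ 2) :
    cf (e a b c) (pb φ (Cc μ * Xv 1 + F')) =
      μ * cf (e a b c) (φ 1)
      + cf (e 2 0 0) F' * cf (e a b c) (Xv 0 ^ 2)
      + cf (e 1 1 0) F' * cf (e a b c) (Xv 0 * φ 1)
      + cf (e 1 0 1) F' * cf (e a b c) (Xv 0 * φ 2)
      + cf (e 0 2 0) F' * cf (e a b c) (φ 1 ^ 2)
      + cf (e 0 1 1) F' * cf (e a b c) (φ 1 * φ 2)
      + cf (e 0 0 2) F' * cf (e a b c) (φ 2 ^ 2) := by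
  rw [cf_pb φ hφc _ _ (by rw [dg_e]; omega), hf0]
  simp only [cf_add, cf_Cc_mul, cf_e_X1]
  rw [lw2_cf hF' 0 0 0 (by norm_num), lw2_cf hF' 1 0 0 (by norm_num),
    lw2_cf hF' 0 1 0 (by norm_num), lw2_cf hF' 0 0 1 (by norm_num)]
  norm_num

lemma cf_pb_SN2 (μ : ℂ) (F' : R3) (hF' : Lw 2 F') (φ : Fin 3 → R3)
    (hφc : ∀ i, (MvPowerSeries.constantCoeff (σ := Fin 3) (R := ℂ)) (φ i) = 0) (hf0 : φ 0 = Xv 0)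
    (a b c : ℕ) (h2 : a + b + c ≤ 2) :
    cf (e a b c) (pb φ (Cc μ * Xv 2 + F')) =
      μ * cf (e a b c) (φ 2)
      + cf (e 2 0 0) F' * cf (e a b c) (Xv 0 ^ 2)
      + cf (e 1 1 0) F' * cf (e a b c) (Xv 0 * φ 1)
      + cf (e 1 0 1) F' * cf (e a b c) (Xv 0 * φ 2)
      + cf (e 0 2 0) F' * cf (e a b c) (φ 1 ^ 2)
      + cf (e 0 1 1) F' * cf (e a b c) (φ 1 * φ 2)
      + cf (e 0 0 2) F' * cf (e a b c) (φ 2 ^ 2) := by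
  rw [cf_pb φ hφc _ _ (by rw [dg_e]; omega), hf0]
  simp only [cf_add, cf_Cc_mul, cf_e_X2]
  rw [lw2_cf hF' 0 0 0 (by norm_num), lw2_cf hF' 1 0 0 (by norm_num),
    lw2_cf hF' 0 1 0 (by norm_num), lw2_cf hF' 0 0 1 (by norm_num)]
  norm_num

/-- **The residue is invariant under fibered conjugacy** of doubly-resonant saddle-nodes
in prepared form. -/
theorem residue_invariant_under_fibered_conjugacy
    (l l' : ℂ) (hl : l ≠ 0) (hl' : l' ≠ 0)
    (F₁ F₂ F₁' F₂' : R3) (hF₁ : F₁ ∈ mI ^ 2) (hF₂ : F₂ ∈ mI ^ 2)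
    (hF₁' : F₁' ∈ mI ^ 2) (hF₂' : F₂' ∈ mI ^ 2)
    (φ : Fin 3 → R3) (hd : IsDiffeo φ) (hf : IsFibered φ)
    (hconj : Conj φ (SN l F₁ F₂) (SN l' F₁' F₂')) :
    resid F₁ F₂ = resid F₁' F₂' := by
  obtain ⟨hφc, hdet⟩ := hd
  have hf0 : φ 0 = Xv 0 := hf
  have L1 : Lw 2 F₁ := lw_mem2 hF₁
  have L2 : Lw 2 F₂ := lw_mem2 hF₂
  have L1' : Lw 2 F₁' := lw_mem2 hF₁'
  have L2' : Lw 2 F₂' := lw_mem2 hF₂'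
  have hZ : ∀ j : Fin 3, pb φ (SN l' F₁' F₂' j) = VF (SN l F₁ F₂) (φ j) := by
    intro j
    have h := hconj (Xv j)
    rwa [VF_X, pb_X] at h
  have hSN1 : (SN l' F₁' F₂' 1 : R3) = Cc (-l') * Xv 1 + F₁' := rfl
  have hSN2 : (SN l' F₁' F₂' 2 : R3) = Cc l' * Xv 2 + F₂' := rfl
  have hz1 : cf 0 (φ 1) = 0 := by rw [cf_zero_eq]; exact hφc 1
  have hz2 : cf 0 (φ 2) = 0 := by rw [cf_zero_eq]; exact hφc 2
  have hz1e : cf (e 0 0 0) (φ 1) = 0 := by rw [e_zero]; exact hz1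
  have hz2e : cf (e 0 0 0) (φ 2) = 0 := by rw [e_zero]; exact hz2
  have hq11 : ∀ a b c : ℕ, a + b + c < 2 → cf (e a b c) (φ 1 ^ 2) = 0 := by
    intro a b c h
    rw [pow_two]
    exact lw_mul (lw_one (hφc 1)) (lw_one (hφc 1)) _ (by rw [dg_e]; exact h)
  have hq12 : ∀ a b c : ℕ, a + b + c < 2 → cf (e a b c) (φ 1 * φ 2) = 0 := fun a b c h =>
    lw_mul (lw_one (hφc 1)) (lw_one (hφc 2)) _ (by rw [dg_e]; exact h)
  have hq22 : ∀ a b c : ℕ, a + b + c < 2 → cf (e a b c) (φ 2 ^ 2) = 0 := by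
    intro a b c h
    rw [pow_two]
    exact lw_mul (lw_one (hφc 2)) (lw_one (hφc 2)) _ (by rw [dg_e]; exact h)
  -- p₁ = 0
  have E1 := congrArg (cf (e 1 0 0)) (hZ 1)
  rw [hSN1, cf_pb_SN1 (-l') F₁' L1' φ hφc hf0 1 0 0 (by norm_num),
    cfVF l F₁ F₂ L1 L2 (φ 1) (e 1 0 0) (by simp) (by simp [dg_e]),
    cf_e_X0sq,
    cf_X_mul_of_le 0 _ (e 0 0 0) (by rw [single0_eq, e_add]) (φ 1),
    cf_X_mul_of_le 0 _ (e 0 0 0) (by rw [single0_eq, e_add]) (φ 2),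
    hz1e, hz2e, hq11 1 0 0 (by norm_num), hq12 1 0 0 (by norm_num), hq22 1 0 0 (by norm_num),
    cf_X_mul_of_zero 1 _ (by simp) _, cf_X_mul_of_zero 2 _ (by simp) _,
    lw2_cf L1 1 0 0 (by norm_num), lw2_cf L2 1 0 0 (by norm_num)] at E1
  norm_num at E1
  have hp1 : cf (e 1 0 0) (φ 1) = 0 := by
    rcases E1 with h | h
    · exact absurd h hl'
    · exact h
  -- p₂ = 0
  have E2 := congrArg (cf (e 1 0 0)) (hZ 2)
  rw [hSN2, cf_pb_SN2 l' F₂' L2' φ hφc hf0 1 0 0 (by norm_num),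
    cfVF l F₁ F₂ L1 L2 (φ 2) (e 1 0 0) (by simp) (by simp [dg_e]),
    cf_e_X0sq,
    cf_X_mul_of_le 0 _ (e 0 0 0) (by rw [single0_eq, e_add]) (φ 1),
    cf_X_mul_of_le 0 _ (e 0 0 0) (by rw [single0_eq, e_add]) (φ 2),
    hz1e, hz2e, hq11 1 0 0 (by norm_num), hq12 1 0 0 (by norm_num), hq22 1 0 0 (by norm_num),
    cf_X_mul_of_zero 1 _ (by simp) _, cf_X_mul_of_zero 2 _ (by simp) _,
    lw2_cf L1 1 0 0 (by norm_num), lw2_cf L2 1 0 0 (by norm_num)] at E2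
  norm_num at E2
  have hp2 : cf (e 1 0 0) (φ 2) = 0 := by
    rcases E2 with h | h
    · exact absurd h hl'
    · exact h
  -- linear equations (A)-(D)
  have EA := congrArg (cf (e 0 1 0)) (hZ 1)
  rw [hSN1, cf_pb_SN1 (-l') F₁' L1' φ hφc hf0 0 1 0 (by norm_num),
    cfVF l F₁ F₂ L1 L2 (φ 1) (e 0 1 0) (by simp) (by simp [dg_e]),
    cf_e_X0sq,
    cf_X_mul_of_zero 0 _ (by simp) (φ 1), cf_X_mul_of_zero 0 _ (by simp) (φ 2),
    hq11 0 1 0 (by norm_num), hq12 0 1 0 (by norm_num), hq22 0 1 0 (by norm_num),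
    cf_X_mul_of_le 1 _ (e 0 0 0) (by rw [single1_eq, e_add]) (pd 1 (φ 1)),
    cf_pd1_e 0 0 0,
    cf_X_mul_of_zero 2 _ (by simp) _,
    lw2_cf L1 0 1 0 (by norm_num), lw2_cf L2 0 1 0 (by norm_num)] at EA
  norm_num at EA
  have EB := congrArg (cf (e 0 0 1)) (hZ 1)
  rw [hSN1, cf_pb_SN1 (-l') F₁' L1' φ hφc hf0 0 0 1 (by norm_num),
    cfVF l F₁ F₂ L1 L2 (φ 1) (e 0 0 1) (by simp) (by simp [dg_e]),
    cf_e_X0sq,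
    cf_X_mul_of_zero 0 _ (by simp) (φ 1), cf_X_mul_of_zero 0 _ (by simp) (φ 2),
    hq11 0 0 1 (by norm_num), hq12 0 0 1 (by norm_num), hq22 0 0 1 (by norm_num),
    cf_X_mul_of_zero 1 _ (by simp) _,
    cf_X_mul_of_le 2 _ (e 0 0 0) (by rw [single2_eq, e_add]) (pd 2 (φ 1)),
    cf_pd2_e 0 0 0,
    lw2_cf L1 0 0 1 (by norm_num), lw2_cf L2 0 0 1 (by norm_num)] at EB
  norm_num at EB
  have EC := congrArg (cf (e 0 1 0)) (hZ 2)
  rw [hSN2, cf_pb_SN2 l' F₂' L2' φ hφc hf0 0 1 0 (by norm_num),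
    cfVF l F₁ F₂ L1 L2 (φ 2) (e 0 1 0) (by simp) (by simp [dg_e]),
    cf_e_X0sq,
    cf_X_mul_of_zero 0 _ (by simp) (φ 1), cf_X_mul_of_zero 0 _ (by simp) (φ 2),
    hq11 0 1 0 (by norm_num), hq12 0 1 0 (by norm_num), hq22 0 1 0 (by norm_num),
    cf_X_mul_of_le 1 _ (e 0 0 0) (by rw [single1_eq, e_add]) (pd 1 (φ 2)),
    cf_pd1_e 0 0 0,
    cf_X_mul_of_zero 2 _ (by simp) _,
    lw2_cf L1 0 1 0 (by norm_num), lw2_cf L2 0 1 0 (by norm_num)] at EC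
  norm_num at EC
  have ED := congrArg (cf (e 0 0 1)) (hZ 2)
  rw [hSN2, cf_pb_SN2 l' F₂' L2' φ hφc hf0 0 0 1 (by norm_num),
    cfVF l F₁ F₂ L1 L2 (φ 2) (e 0 0 1) (by simp) (by simp [dg_e]),
    cf_e_X0sq,
    cf_X_mul_of_zero 0 _ (by simp) (φ 1), cf_X_mul_of_zero 0 _ (by simp) (φ 2),
    hq11 0 0 1 (by norm_num), hq12 0 0 1 (by norm_num), hq22 0 0 1 (by norm_num),
    cf_X_mul_of_zero 1 _ (by simp) _,
    cf_X_mul_of_le 2 _ (e 0 0 0) (by rw [single2_eq, e_add]) (pd 2 (φ 2)),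
    cf_pd2_e 0 0 0,
    lw2_cf L1 0 0 1 (by norm_num), lw2_cf L2 0 0 1 (by norm_num)] at ED
  norm_num at ED
  -- quadratic vanishing at the degree-2 monomials
  have q11a : cf (e 1 1 0) (φ 1 ^ 2) = 0 := by
    rw [pow_two]; exact cf_quad_zero hz1 hz1 hp1 hp1 _ (by simp [dg_e]) (by simp)
  have q12a : cf (e 1 1 0) (φ 1 * φ 2) = 0 :=
    cf_quad_zero hz1 hz2 hp1 hp2 _ (by simp [dg_e]) (by simp)
  have q22a : cf (e 1 1 0) (φ 2 ^ 2) = 0 := by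
    rw [pow_two]; exact cf_quad_zero hz2 hz2 hp2 hp2 _ (by simp [dg_e]) (by simp)
  have q11b : cf (e 1 0 1) (φ 1 ^ 2) = 0 := by
    rw [pow_two]; exact cf_quad_zero hz1 hz1 hp1 hp1 _ (by simp [dg_e]) (by simp)
  have q12b : cf (e 1 0 1) (φ 1 * φ 2) = 0 :=
    cf_quad_zero hz1 hz2 hp1 hp2 _ (by simp [dg_e]) (by simp)
  have q22b : cf (e 1 0 1) (φ 2 ^ 2) = 0 := by
    rw [pow_two]; exact cf_quad_zero hz2 hz2 hp2 hp2 _ (by simp [dg_e]) (by simp)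
  -- the four degree-2 equations
  have E3 := congrArg (cf (e 1 1 0)) (hZ 1)
  rw [hSN1, cf_pb_SN1 (-l') F₁' L1' φ hφc hf0 1 1 0 (by norm_num),
    cfVF l F₁ F₂ L1 L2 (φ 1) (e 1 1 0) (by simp) (by simp [dg_e]),
    cf_e_X0sq,
    cf_X_mul_of_le 0 _ (e 0 1 0) (by rw [single0_eq, e_add]) (φ 1),
    cf_X_mul_of_le 0 _ (e 0 1 0) (by rw [single0_eq, e_add]) (φ 2),
    q11a, q12a, q22a,
    cf_X_mul_of_le 1 _ (e 1 0 0) (by rw [single1_eq, e_add]) (pd 1 (φ 1)),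
    cf_pd1_e 1 0 0,
    cf_X_mul_of_zero 2 _ (by simp) _,
    cf0_pd1, cf0_pd2] at E3
  norm_num at E3
  have E4 := congrArg (cf (e 1 0 1)) (hZ 1)
  rw [hSN1, cf_pb_SN1 (-l') F₁' L1' φ hφc hf0 1 0 1 (by norm_num),
    cfVF l F₁ F₂ L1 L2 (φ 1) (e 1 0 1) (by simp) (by simp [dg_e]),
    cf_e_X0sq,
    cf_X_mul_of_le 0 _ (e 0 0 1) (by rw [single0_eq, e_add]) (φ 1),
    cf_X_mul_of_le 0 _ (e 0 0 1) (by rw [single0_eq, e_add]) (φ 2),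
    q11b, q12b, q22b,
    cf_X_mul_of_zero 1 _ (by simp) _,
    cf_X_mul_of_le 2 _ (e 1 0 0) (by rw [single2_eq, e_add]) (pd 2 (φ 1)),
    cf_pd2_e 1 0 0,
    cf0_pd1, cf0_pd2] at E4
  norm_num at E4
  have E5 := congrArg (cf (e 1 1 0)) (hZ 2)
  rw [hSN2, cf_pb_SN2 l' F₂' L2' φ hφc hf0 1 1 0 (by norm_num),
    cfVF l F₁ F₂ L1 L2 (φ 2) (e 1 1 0) (by simp) (by simp [dg_e]),
    cf_e_X0sq,
    cf_X_mul_of_le 0 _ (e 0 1 0) (by rw [single0_eq, e_add]) (φ 1),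
    cf_X_mul_of_le 0 _ (e 0 1 0) (by rw [single0_eq, e_add]) (φ 2),
    q11a, q12a, q22a,
    cf_X_mul_of_le 1 _ (e 1 0 0) (by rw [single1_eq, e_add]) (pd 1 (φ 2)),
    cf_pd1_e 1 0 0,
    cf_X_mul_of_zero 2 _ (by simp) _,
    cf0_pd1, cf0_pd2] at E5
  norm_num at E5
  have E6 := congrArg (cf (e 1 0 1)) (hZ 2)
  rw [hSN2, cf_pb_SN2 l' F₂' L2' φ hφc hf0 1 0 1 (by norm_num),
    cfVF l F₁ F₂ L1 L2 (φ 2) (e 1 0 1) (by simp) (by simp [dg_e]),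
    cf_e_X0sq,
    cf_X_mul_of_le 0 _ (e 0 0 1) (by rw [single0_eq, e_add]) (φ 1),
    cf_X_mul_of_le 0 _ (e 0 0 1) (by rw [single0_eq, e_add]) (φ 2),
    q11b, q12b, q22b,
    cf_X_mul_of_zero 1 _ (by simp) _,
    cf_X_mul_of_le 2 _ (e 1 0 0) (by rw [single2_eq, e_add]) (pd 2 (φ 2)),
    cf_pd2_e 1 0 0,
    cf0_pd1, cf0_pd2] at E6
  norm_num at E6
  -- the determinant
  have hdetv : (linM φ).det =
      cf (e 0 1 0) (φ 1) * cf (e 0 0 1) (φ 2) - cf (e 0 0 1) (φ 1) * cf (e 0 1 0) (φ 2) := by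
    rw [Matrix.det_fin_three]
    simp only [linM, Matrix.of_apply, single0_eq, single1_eq, single2_eq, hf0, cf_e_X0]
    norm_num [hp1, hp2]
  have hdne : cf (e 0 1 0) (φ 1) * cf (e 0 0 1) (φ 2)
      - cf (e 0 0 1) (φ 1) * cf (e 0 1 0) (φ 2) ≠ 0 := hdetv ▸ hdet.ne_zero
  by_cases hll : l' = l
  · subst hll
    have hB1 : cf (e 0 0 1) (φ 1) = 0 := by
      have h2 : (2 * l') * cf (e 0 0 1) (φ 1) = 0 := by linear_combination -EB
      rcases mul_eq_zero.mp h2 with h | h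
      · exact absurd h (mul_ne_zero two_ne_zero hl')
      · exact h
    have hA2 : cf (e 0 1 0) (φ 2) = 0 := by
      have h2 : (2 * l') * cf (e 0 1 0) (φ 2) = 0 := by linear_combination EC
      rcases mul_eq_zero.mp h2 with h | h
      · exact absurd h (mul_ne_zero two_ne_zero hl')
      · exact h
    have hA1 : cf (e 0 1 0) (φ 1) ≠ 0 := fun h => hdne (by rw [h, hA2]; ring)
    have hB2 : cf (e 0 0 1) (φ 2) ≠ 0 := fun h => hdne (by rw [h, hB1]; ring)
    have k1 : cf (e 1 1 0) F₁' = cf (e 1 1 0) F₁ := by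
      apply mul_right_cancel₀ hA1
      linear_combination E3 - cf (e 1 0 1) F₁' * hA2 + cf (e 1 1 0) F₂ * hB1
    have k2 : cf (e 1 0 1) F₂' = cf (e 1 0 1) F₂ := by
      apply mul_right_cancel₀ hB2
      linear_combination E6 - cf (e 1 1 0) F₂' * hB1 + cf (e 1 0 1) F₁ * hA2
    unfold resid
    rw [k1, k2]
  · have hA1 : cf (e 0 1 0) (φ 1) = 0 := by
      rcases EA with h | h
      · exact absurd h hll
      · exact h
    have hB2 : cf (e 0 0 1) (φ 2) = 0 := by
      rcases ED with h | h
      · exact absurd h hll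
      · exact h
    have hB1 : cf (e 0 0 1) (φ 1) ≠ 0 := fun h => hdne (by rw [hA1, h]; ring)
    have hA2 : cf (e 0 1 0) (φ 2) ≠ 0 := fun h => hdne (by rw [hA1, h]; ring)
    have hll2 : l' = -l := by
      have h2 : (l' + l) * cf (e 0 0 1) (φ 1) = 0 := by linear_combination -EB
      rcases mul_eq_zero.mp h2 with h | h
      · exact eq_neg_of_add_eq_zero_left h
      · exact absurd h hB1
    have k1 : cf (e 1 1 0) F₁' = cf (e 1 0 1) F₂ := by
      apply mul_right_cancel₀ hB1
      linear_combination E4 + cf (e 1 0 1) (φ 1) * hll2 - cf (e 1 0 1) F₁' * hB2 +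
        cf (e 1 0 1) F₁ * hA1
    have k2 : cf (e 1 0 1) F₂' = cf (e 1 1 0) F₁ := by
      apply mul_right_cancel₀ hA2
      linear_combination E5 - cf (e 1 1 0) (φ 2) * hll2 - cf (e 1 1 0) F₂' * hA1 +
        cf (e 1 1 0) F₂ * hB2
    unfold resid
    rw [k1, k2]
    ring

end
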